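/- Let k ≥ 1, let ν_1,…,ν_{2k−1} and μ_1,…,μ_{2k} be real numbers, and let x_1,…,x_{2k−1} ∈ ℂ, x_{2k} ∈ ℝ be such that the Hermitian matrix H(ν,x) has characteristic polynomial ∏_{l=1}^{2k}(X − μ_l). Suppose j ∈ {1,…,2k} and m ∈ {1,…,2k−1} are such that μ_j = ν_m and ν_l ≠ μ_j for every l ≠ m. Then x_m = 0. -/

import Mathlib

open Matrix Polynomial

/-- The `2k × 2k` complex Hermitian matrix `H(ν, x)` with diagonal
`(ν₁, …, ν_{2k-1}, xlast)`, whose `(i, 2k)` entry is the conjugate of `x i` and whose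
`(2k, i)` entry is `x i` for `1 ≤ i ≤ 2k-1`, all other entries `0`. -/
def Hmat (k : ℕ) (ν : Fin (2*k-1) → ℝ) (x : Fin (2*k-1) → ℂ) (xlast : ℝ) :
    Matrix (Fin (2*k)) (Fin (2*k)) ℂ :=
  Matrix.of fun i j =>
    if hi : i.val < 2*k-1 then
      if hj : j.val < 2*k-1 then (if i = j then (ν ⟨i.val, hi⟩ : ℂ) else 0)
      else (starRingEnd ℂ) (x ⟨i.val, hi⟩)
    else if hj : j.val < 2*k-1 then x ⟨j.val, hj⟩ else (xlast : ℂ)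

lemma charpoly_eval {n : ℕ} (M : Matrix (Fin n) (Fin n) ℂ) (r : ℂ) :
    M.charpoly.eval r = (r • (1 : Matrix (Fin n) (Fin n) ℂ) - M).det := by
  rw [Matrix.charpoly, ← Polynomial.coe_evalRingHom, RingHom.map_det]
  congr 1
  ext i j
  by_cases h : i = j <;>
    simp [Matrix.charmatrix_apply, Matrix.one_apply, Matrix.diagonal_apply, h]

/-- If `H(ν, x)` has eigenvalues `μ₁, …, μ_{2k}` and `m` is the unique index with
`ν m = μ j`, then `x m = 0`. -/
theorem statement11 (k : ℕ) (hk : 1 ≤ k) (μ : Fin (2*k) → ℝ) (ν : Fin (2*k-1) → ℝ)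
    (x : Fin (2*k-1) → ℂ) (xlast : ℝ)
    (hchar : (Hmat k ν x xlast).charpoly = ∏ l : Fin (2*k), (X - C (μ l : ℂ)))
    (j : Fin (2*k)) (m : Fin (2*k-1)) (hjm : μ j = ν m)
    (huniq : ∀ l : Fin (2*k-1), l ≠ m → ν l ≠ μ j) :
    x m = 0 := by
  by_contra hx
  have hlt : 2*k-1 < 2*k := by omega
  set Lst : Fin (2*k) := ⟨2*k-1, hlt⟩ with hLst
  have elt : ∀ l : Fin (2*k-1), l.val < 2*k := fun l => lt_trans l.isLt hlt
  set e : Fin (2*k-1) → Fin (2*k) := fun l => ⟨l.val, elt l⟩ with he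
  set A : Matrix (Fin (2*k)) (Fin (2*k)) ℂ :=
    ((ν m : ℂ)) • 1 - Hmat k ν x xlast with hA
  -- determinant vanishes
  have hdet : A.det = 0 := by
    have h1 := congrArg (Polynomial.eval ((ν m : ℂ))) hchar
    rw [charpoly_eval] at h1
    rw [hA, h1, Polynomial.eval_prod]
    apply Finset.prod_eq_zero (Finset.mem_univ j)
    simp [hjm]
  obtain ⟨v, hv0, hAv⟩ := (Matrix.exists_mulVec_eq_zero_iff).mpr hdet
  -- entry computations
  have hAentry : ∀ (i jj : Fin (2*k)), A i jj =
      (if i = jj then (ν m : ℂ) else 0) - Hmat k ν x xlast i jj := by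
    intro i jj
    simp [hA, Matrix.sub_apply, Matrix.smul_apply, Matrix.one_apply]
  have hem_ne_Lst : ∀ l : Fin (2*k-1), e l ≠ Lst := by
    intro l h
    have := congrArg Fin.val h
    simp [he, hLst] at this
    omega
  -- off-row entries zero
  have hrow : ∀ (l : Fin (2*k-1)) (b : Fin (2*k)), b ≠ Lst → b ≠ e l →
      A (e l) b = 0 := by
    intro l b hbL hbe
    have hb : b.val < 2*k-1 := by
      have := b.isLt
      have : b.val ≠ 2*k-1 := fun h => hbL (Fin.ext h)
      omega
    rw [hAentry]
    have hne : e l ≠ b := fun h => hbe h.symm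
    simp [Hmat, l.isLt, hb, hne]
    intro h; exfalso; have := l.isLt; change 2*k ≤ l.val + 1 at h; omega
  -- v Lst = 0
  have hvLst : v Lst = 0 := by
    have h1 := congrFun hAv (e m)
    rw [Matrix.mulVec, dotProduct] at h1
    rw [Finset.sum_eq_single Lst (fun b _ hb => by
      by_cases hbe : b = e m
      · subst hbe
        have : A (e m) (e m) = 0 := by
          rw [hAentry]
          simp [Hmat, m.isLt, he]
        rw [this, zero_mul]
      · rw [hrow m b hb hbe, zero_mul]) (fun h => absurd (Finset.mem_univ _) h)] at h1
    have hALst : A (e m) Lst = -(starRingEnd ℂ) (x m) := by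
      rw [hAentry]
      simp [Hmat, m.isLt, hLst, hem_ne_Lst m, he]
      intro h; have := m.isLt; omega
    rw [hALst] at h1
    simp at h1
    rcases h1 with h | h
    · exact absurd (by simpa using congrArg (starRingEnd ℂ) h) hx
    · exact h
  -- v (e l) = 0 for l ≠ m
  have hvel : ∀ l : Fin (2*k-1), l ≠ m → v (e l) = 0 := by
    intro l hlm
    have h1 := congrFun hAv (e l)
    rw [Matrix.mulVec, dotProduct] at h1
    rw [Finset.sum_eq_single (e l) (fun b _ hb => by
      by_cases hbL : b = Lst
      · subst hbL; rw [hvLst, mul_zero]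
      · rw [hrow l b hbL hb, zero_mul]) (fun h => absurd (Finset.mem_univ _) h)] at h1
    have hdiag : A (e l) (e l) = (ν m : ℂ) - (ν l : ℂ) := by
      rw [hAentry]; simp [Hmat, l.isLt, he]
    rw [hdiag] at h1
    have hne : (ν m : ℂ) - (ν l : ℂ) ≠ 0 := by
      rw [sub_ne_zero]
      exact_mod_cast fun h => (huniq l hlm) (by rw [hjm]; exact_mod_cast h.symm)
    exact (mul_eq_zero.mp h1).resolve_left hne
  -- v (e m) = 0
  have hvem : v (e m) = 0 := by
    have h1 := congrFun hAv Lst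
    rw [Matrix.mulVec, dotProduct] at h1
    rw [Finset.sum_eq_single (e m) (fun b _ hb => by
      by_cases hbL : b = Lst
      · subst hbL; rw [hvLst, mul_zero]
      · have hb' : b.val < 2*k-1 := by
          have : b.val ≠ 2*k-1 := fun h => hbL (Fin.ext h)
          have := b.isLt; omega
        have hbm : (⟨b.val, hb'⟩ : Fin (2*k-1)) ≠ m := by
          intro h
          apply hb
          rw [← h]
        have hvb : v b = 0 := hvel ⟨b.val, hb'⟩ hbm
        rw [hvb, mul_zero])
      (fun h => absurd (Finset.mem_univ _) h)] at h1
    have hentry : A Lst (e m) = -(x m) := by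
      rw [hAentry]
      simp [Hmat, m.isLt, hLst, (hem_ne_Lst m).symm, Ne.symm (hem_ne_Lst m), he]
      intro h; have := m.isLt; omega
    rw [hentry] at h1
    simp at h1
    exact h1.resolve_left hx
  -- conclude v = 0, contradiction
  apply hv0
  funext i
  by_cases hi : i.val < 2*k-1
  · have : i = e ⟨i.val, hi⟩ := rfl
    rw [this]
    by_cases him : (⟨i.val, hi⟩ : Fin (2*k-1)) = m
    · rw [him]; exact hvem
    · exact hvel _ him
  · have : i = Lst := by
      apply Fin.ext
      have := i.isLt
      simp [hLst]; omega
    rw [this]; exact hvLst
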